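/- arXiv:1305.2098 — 4 statements merged into one kernel-verified Lean document; each statement's English description precedes it below -/
import Mathlib

section
/- The elements A_{i,s} (i ∈ {1,2,3}, s ∈ ℤ) of the free abelian group on the variables Y_{j,t} are multiplicatively independent: if a finite product ∏ A_{i,s}^{v_{i,s}} with integer exponents equals the trivial monomial, then all exponents v_{i,s} are zero. -/
/-- Monomials of type `C₃`: finitely supported exponent functions on `{1,2,3} × ℤ`. -/
abbrev Mon : Type := (Fin 3 × ℤ) →₀ ℤ

/-- The generator `Y_{i,s}` (index `i : Fin 3` stands for `i+1 ∈ {1,2,3}`). -/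
noncomputable def Y (i : Fin 3) (s : ℤ) : Mon := Finsupp.single (i, s) 1

/-- The elements `A_{i,s}` of type `C₃` (written additively on exponents). -/
noncomputable def A : Fin 3 → ℤ → Mon
  | 0, s => Y 0 (s + 1) + Y 0 (s - 1) - Y 1 s
  | 1, s => Y 1 (s + 1) + Y 1 (s - 1) - Y 0 s - Y 2 s
  | 2, s => Y 2 (s + 2) + Y 2 (s - 2) - Y 1 (s + 1) - Y 1 (s - 1)

/-- Right-negativity. -/
def RightNegative (u : Mon) : Prop :=
  ∀ (i : Fin 3) (s : ℤ), u (i, s) ≠ 0 → (∀ (j : Fin 3) (t : ℤ), s < t → u (j, t) = 0) →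
    u (i, s) < 0

/-- Dominance: all exponents nonnegative. -/
def Dominant (u : Mon) : Prop := ∀ p : Fin 3 × ℤ, 0 ≤ u p

/-- "Transpose" elements: `B i t (j,s) = A j s (i,t)`. -/
noncomputable def B : Fin 3 → ℤ → Mon
  | 0, t => Y 0 (t - 1) + Y 0 (t + 1) - Y 1 t
  | 1, t => Y 1 (t - 1) + Y 1 (t + 1) - Y 0 t - Y 2 (t - 1) - Y 2 (t + 1)
  | 2, t => Y 2 (t - 2) + Y 2 (t + 2) - Y 1 t

lemma A_transpose (j : Fin 3) (s : ℤ) (i : Fin 3) (t : ℤ) :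
    A j s (i, t) = B i t (j, s) := by
  fin_cases j <;> fin_cases i <;>
    simp [A, B, Y, Finsupp.single_apply, Prod.ext_iff] <;>
    split_ifs <;> omega

def pair (v w : Mon) : ℤ := v.sum fun p c => c * w p

lemma pair_add (v w₁ w₂ : Mon) : pair v (w₁ + w₂) = pair v w₁ + pair v w₂ := by
  unfold pair
  rw [← Finsupp.sum_add]
  simp [mul_add]

lemma pair_sub (v w₁ w₂ : Mon) : pair v (w₁ - w₂) = pair v w₁ - pair v w₂ := by
  unfold pair
  rw [← Finsupp.sum_sub]
  simp [mul_sub]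

lemma pair_Y (v : Mon) (i : Fin 3) (s : ℤ) : pair v (Y i s) = v (i, s) := by
  classical
  unfold pair Y
  rw [Finsupp.sum]
  simp only [Finsupp.single_apply, mul_ite, mul_one, mul_zero]
  rw [Finset.sum_ite_eq v.support (i, s) (fun p => v p)]
  split
  · rfl
  · exact (Finsupp.notMem_support_iff.mp ‹_›).symm


/-- The elements `A_{i,s}` are multiplicatively (here: additively) independent:
if a finite integral combination of them is trivial, then all exponents vanish. -/
theorem A_independent (v : (Fin 3 × ℤ) →₀ ℤ)
    (h : (v.sum fun p c => c • A p.1 p.2) = 0) : v = 0 := by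
  classical
  -- coordinate equations
  have key : ∀ (i : Fin 3) (t : ℤ), pair v (B i t) = 0 := by
    intro i t
    have h2 : (v.sum fun p c => c • A p.1 p.2) (i, t) = 0 := by rw [h]; rfl
    rw [Finsupp.sum_apply] at h2
    have : (v.sum fun p c => c * A p.1 p.2 (i, t)) = 0 := by
      simpa using h2
    rw [← this]
    unfold pair
    apply Finsupp.sum_congr
    intro p _
    rw [A_transpose]
  have E0 : ∀ t : ℤ, v (0, t - 1) + v (0, t + 1) - v (1, t) = 0 := by
    intro t
    have := key 0 t
    simpa [B, pair_add, pair_sub, pair_Y] using this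
  have E1 : ∀ t : ℤ, v (1, t - 1) + v (1, t + 1) - v (0, t) - v (2, t - 1) - v (2, t + 1) = 0 := by
    intro t
    have := key 1 t
    simpa [B, pair_add, pair_sub, pair_Y] using this
  have E2 : ∀ t : ℤ, v (2, t - 2) + v (2, t + 2) - v (1, t) = 0 := by
    intro t
    have := key 2 t
    simpa [B, pair_add, pair_sub, pair_Y] using this
  -- now the max argument
  by_contra hv
  have hsupp : v.support.Nonempty := Finsupp.support_nonempty_iff.mpr hv
  set D : Fin 3 → ℤ := ![1, 1, 2] with hD
  have himg : (v.support.image fun p => p.2 + D p.1).Nonempty := hsupp.image _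
  set T := (v.support.image fun p => p.2 + D p.1).max' himg with hT
  have hle : ∀ p ∈ v.support, p.2 + D p.1 ≤ T := by
    intro p hp
    apply Finset.le_max'
    exact Finset.mem_image_of_mem _ hp
  have hvz : ∀ (j : Fin 3) (s : ℤ), T < s + D j → v (j, s) = 0 := by
    intro j s hs
    by_contra hne
    have := hle (j, s) (Finsupp.mem_support_iff.mpr hne)
    simp at this
    omega
  obtain ⟨q, hq⟩ := Finset.mem_image.mp ((v.support.image fun p => p.2 + D p.1).max'_mem himg)
  obtain ⟨hqmem, hqT⟩ := hq
  have hD0 : D 0 = 1 := rfl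
  have hD1 : D 1 = 1 := rfl
  have hD2 : D 2 = 2 := rfl
  have z0 : v (0, T - 1) = 0 := by
    have := E0 T
    have a := hvz 0 (T + 1) (by rw [hD0]; omega)
    have b := hvz 1 T (by rw [hD1]; omega)
    omega
  have z1 : v (1, T - 1) = 0 := by
    have := E1 T
    have a := hvz 1 (T + 1) (by rw [hD1]; omega)
    have b := hvz 0 T (by rw [hD0]; omega)
    have c := hvz 2 (T - 1) (by rw [hD2]; omega)
    have d := hvz 2 (T + 1) (by rw [hD2]; omega)
    omega
  have z2 : v (2, T - 2) = 0 := by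
    have := E2 T
    have a := hvz 2 (T + 2) (by rw [hD2]; omega)
    have b := hvz 1 T (by rw [hD1]; omega)
    omega
  have hqne : v q ≠ 0 := Finsupp.mem_support_iff.mp hqmem
  obtain ⟨i, s⟩ := q
  rw [← hT] at hqT
  fin_cases i
  · have hqT' : s + D 0 = T := hqT
    rw [hD0] at hqT'
    have hs : s = T - 1 := by omega
    exact hqne (show v (0, s) = 0 by rw [hs]; exact z0)
  · have hqT' : s + D 1 = T := hqT
    rw [hD1] at hqT'
    have hs : s = T - 1 := by omega
    exact hqne (show v (1, s) = 0 by rw [hs]; exact z1)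
  · have hqT' : s + D 2 = T := hqT
    rw [hD2] at hqT'
    have hs : s = T - 2 := by omega
    exact hqne (show v (2, s) = 0 by rw [hs]; exact z2)
end

section
/- Let Q⁺ be the submonoid of the free abelian group P generated by the elements A_{i,s} (i ∈ {1,2,3}, s ∈ ℤ) and let Q⁻ be the submonoid generated by their inverses. Then Q⁺ ∩ Q⁻ = {1}. -/
/-- `Q⁺`: the submonoid generated by the `A_{i,s}`. -/
noncomputable def Qplus : AddSubmonoid Mon :=
  AddSubmonoid.closure (Set.range fun p : Fin 3 × ℤ => A p.1 p.2)

/-- `Q⁻`: the submonoid generated by the inverses `A_{i,s}^{-1}`. -/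
noncomputable def Qminus : AddSubmonoid Mon :=
  AddSubmonoid.closure (Set.range fun p : Fin 3 × ℤ => -(A p.1 p.2))


noncomputable def phi : Mon →ₗ[ℤ] ℤ :=
  Finsupp.linearCombination ℤ (fun p : Fin 3 × ℤ => ![(3:ℤ),5,6] p.1)

lemma phi_Y (i : Fin 3) (s : ℤ) : phi (Y i s) = ![(3:ℤ),5,6] i := by
  simp [phi, Y, Finsupp.linearCombination_single]

lemma phi_A_pos (i : Fin 3) (s : ℤ) : 0 < phi (A i s) := by
  fin_cases i <;>
    simp [A, map_add, map_sub, phi_Y] <;> norm_num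

lemma mem_Qplus (m : Mon) (h : m ∈ Qplus) : m = 0 ∨ 0 < phi m := by
  refine AddSubmonoid.closure_induction ?_ ?_ ?_ h
  · rintro x ⟨p, rfl⟩
    exact Or.inr (phi_A_pos p.1 p.2)
  · exact Or.inl rfl
  · rintro x y _ _ (rfl | hx) (rfl | hy)
    · simp
    · exact Or.inr (by simpa using hy)
    · exact Or.inr (by simpa using hx)
    · exact Or.inr (by have := map_add phi x y; omega)

lemma mem_Qminus (m : Mon) (h : m ∈ Qminus) : m = 0 ∨ phi m < 0 := by
  refine AddSubmonoid.closure_induction ?_ ?_ ?_ h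
  · rintro x ⟨p, rfl⟩
    have := phi_A_pos p.1 p.2
    rw [map_neg]
    omega
  · exact Or.inl rfl
  · rintro x y _ _ (rfl | hx) (rfl | hy)
    · simp
    · exact Or.inr (by simpa using hy)
    · exact Or.inr (by simpa using hx)
    · exact Or.inr (by have := map_add phi x y; omega)

/-- `Q⁺ ∩ Q⁻ = {1}` (written additively: the intersection is trivial). -/
theorem Qplus_inter_Qminus (m : Mon) (h₁ : m ∈ Qplus) (h₂ : m ∈ Qminus) : m = 0 := by
  rcases mem_Qplus m h₁ with rfl | hp
  · rfl
  rcases mem_Qminus m h₂ with rfl | hm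
  · rfl
  omega
end

section
/- For integers k ≥ 1, ℓ ≥ 1, any integer s, and any 0 ≤ p ≤ ℓ−1, the monomial M_p = T_{k,ℓ-1,0}^{(s)} · T_{k-1,ℓ,0}^{(s+4)} · ∏_{j=1}^{p} A_{2,s+4k+2ℓ-2j}^{-1} is dominant (all exponents nonnegative), and these ℓ monomials M₀, …, M_{ℓ−1} are pairwise distinct. -/
/-- The highest `l`-weight `T_{k,ℓ,m}^{(s)} = (∏ 3_{s+4i})(∏ 2_{s+4k+2i+1})(∏ 1_{s+4k+2ℓ+2i+2})`.
Here `Y 2`, `Y 1`, `Y 0` stand for the variables with node index `3`, `2`, `1`. -/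
noncomputable def T (k l m : ℕ) (s : ℤ) : Mon :=
  (∑ i ∈ Finset.range k, Y 2 (s + 4 * i)) +
  (∑ i ∈ Finset.range l, Y 1 (s + 4 * k + 2 * i + 1)) +
  (∑ i ∈ Finset.range m, Y 0 (s + 4 * k + 2 * l + 2 * i + 2))

/-- `M_p = T_{k,ℓ-1,0}^{(s)} T_{k-1,ℓ,0}^{(s+4)} ∏_{j=1}^{p} A_{2,s+4k+2ℓ-2j}^{-1}`. -/
noncomputable def M (k l : ℕ) (s : ℤ) (p : ℕ) : Mon :=
  T k (l - 1) 0 s + T (k - 1) l 0 (s + 4) -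
    ∑ j ∈ Finset.Icc 1 p, A 1 (s + 4 * k + 2 * l - 2 * j)

open Finset

lemma mySum_Ico_reflect {G : Type*} [AddCommMonoid G] (m p : ℕ) (hp : p ≤ m) (f : ℕ → G) :
    ∑ i ∈ Ico (m - p) m, f i = ∑ j ∈ Icc 1 p, f (m - j) := by
  refine Finset.sum_nbij' (fun i => m - i) (fun j => m - j) ?_ ?_ ?_ ?_ ?_ <;>
    · intro a ha
      simp only [Finset.mem_Ico, Finset.mem_Icc] at *
      first
        | omega
        | (congr 1; omega)

/-- The manifestly dominant closed form of `M`. -/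
noncomputable def N (k l : ℕ) (s : ℤ) (p : ℕ) : Mon :=
  (∑ i ∈ range k, Y 2 (s + 4 * i)) + (∑ i ∈ range (k - 1), Y 2 (s + 4 + 4 * i)) +
  (∑ i ∈ range (l - 1 - p), Y 1 (s + 4 * k + 2 * i + 1)) +
  (∑ i ∈ range (l - p), Y 1 (s + 4 * k + 2 * i + 1)) +
  ∑ j ∈ Icc 1 p, (Y 0 (s + 4 * k + 2 * l - 2 * j) + Y 2 (s + 4 * k + 2 * l - 2 * j))

lemma M_eq (k l : ℕ) (hk : 1 ≤ k) (hl : 1 ≤ l) (s : ℤ) (p : ℕ) (hp : p ≤ l - 1) :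
    M k l s p = N k l s p := by
  have e1 : ∑ i ∈ range (l - 1), Y 1 (s + 4 * k + 2 * i + 1)
      = (∑ i ∈ range (l - 1 - p), Y 1 (s + 4 * k + 2 * i + 1))
        + ∑ j ∈ Icc 1 p, Y 1 (s + 4 * k + 2 * l - 2 * j - 1) := by
    rw [← Finset.sum_range_add_sum_Ico _ (show l - 1 - p ≤ l - 1 by omega),
        mySum_Ico_reflect (l - 1) p (by omega)]
    congr 1
    refine Finset.sum_congr rfl fun j hj => ?_
    simp only [Finset.mem_Icc] at hj
    congr 1
    omega
  have e2 : ∑ i ∈ range l, Y 1 (s + 4 * k + 2 * i + 1)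
      = (∑ i ∈ range (l - p), Y 1 (s + 4 * k + 2 * i + 1))
        + ∑ j ∈ Icc 1 p, Y 1 (s + 4 * k + 2 * l - 2 * j + 1) := by
    rw [← Finset.sum_range_add_sum_Ico _ (show l - p ≤ l by omega),
        mySum_Ico_reflect l p (by omega)]
    congr 1
    refine Finset.sum_congr rfl fun j hj => ?_
    simp only [Finset.mem_Icc] at hj
    congr 1
    omega
  have e3 : ∑ j ∈ Icc 1 p, A 1 (s + 4 * k + 2 * l - 2 * j)
      = ((∑ j ∈ Icc 1 p, Y 1 (s + 4 * k + 2 * l - 2 * j + 1))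
        + (∑ j ∈ Icc 1 p, Y 1 (s + 4 * k + 2 * l - 2 * j - 1))
        - (∑ j ∈ Icc 1 p, Y 0 (s + 4 * k + 2 * l - 2 * j)))
        - (∑ j ∈ Icc 1 p, Y 2 (s + 4 * k + 2 * l - 2 * j)) := by
    simp only [A]
    rw [Finset.sum_sub_distrib, Finset.sum_sub_distrib, Finset.sum_add_distrib]
  have e4 : ∑ i ∈ range l, Y 1 (s + 4 + 4 * ((k - 1 : ℕ) : ℤ) + 2 * i + 1)
      = ∑ i ∈ range l, Y 1 (s + 4 * k + 2 * i + 1) := by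
    refine Finset.sum_congr rfl fun i _ => ?_
    congr 1
    omega
  unfold M T N
  simp only [range_zero, sum_empty, add_zero]
  rw [e4, e1, e2, e3, Finset.sum_add_distrib]
  abel

lemma Y_nonneg (i : Fin 3) (a : ℤ) (pt : Fin 3 × ℤ) : 0 ≤ Y i a pt := by
  simp only [Y]
  rw [Finsupp.single_apply]
  split <;> norm_num

lemma N_dominant (k l : ℕ) (s : ℤ) (p : ℕ) : Dominant (N k l s p) := by
  intro pt
  unfold N
  simp only [Finsupp.add_apply, Finsupp.finset_sum_apply]
  refine add_nonneg (add_nonneg (add_nonneg (add_nonneg ?_ ?_) ?_) ?_) ?_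
  · exact Finset.sum_nonneg fun i _ => Y_nonneg _ _ _
  · exact Finset.sum_nonneg fun i _ => Y_nonneg _ _ _
  · exact Finset.sum_nonneg fun i _ => Y_nonneg _ _ _
  · exact Finset.sum_nonneg fun i _ => Y_nonneg _ _ _
  · exact Finset.sum_nonneg fun j _ => add_nonneg (Y_nonneg _ _ _) (Y_nonneg _ _ _)

lemma N_apply0 (k l : ℕ) (s : ℤ) (p : ℕ) (t : ℤ) :
    N k l s p (0, t)
      = ∑ j ∈ Icc 1 p, (if s + 4 * k + 2 * l - 2 * (j : ℤ) = t then (1 : ℤ) else 0) := by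
  unfold N Y
  simp [Finsupp.single_apply, Finsupp.finset_sum_apply, Finsupp.add_apply, Prod.ext_iff,
    Fin.ext_iff]

/-- For `0 ≤ p ≤ ℓ-1` the monomials `M_p` are dominant and pairwise distinct. -/
theorem M_dominant_and_distinct (k l : ℕ) (hk : 1 ≤ k) (hl : 1 ≤ l) (s : ℤ) :
    (∀ p ≤ l - 1, Dominant (M k l s p)) ∧
    (∀ p ≤ l - 1, ∀ q ≤ l - 1, M k l s p = M k l s q → p = q) := by
  have key : ∀ p q : ℕ, p < q → q ≤ l - 1 → M k l s p ≠ M k l s q := by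
    intro p q hpq hq h
    have h0 := congrArg (fun u : Mon => u (0, s + 4 * k + 2 * l - 2 * q)) h
    simp only [M_eq k l hk hl s p (by omega), M_eq k l hk hl s q hq, N_apply0] at h0
    rw [Finset.sum_eq_zero, Finset.sum_eq_single q] at h0
    · rw [if_pos rfl] at h0
      exact absurd h0 (by norm_num)
    · intro j hj hne
      simp only [Finset.mem_Icc] at hj
      rw [if_neg (by omega)]
    · intro hq'
      exact absurd (Finset.mem_Icc.mpr ⟨by omega, le_refl q⟩) hq'
    · intro j hj
      simp only [Finset.mem_Icc] at hj
      rw [if_neg (by omega)]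
  constructor
  · intro p hp
    rw [M_eq k l hk hl s p hp]
    exact N_dominant k l s p
  · intro p hp q hq h
    rcases lt_trichotomy p q with h' | h' | h'
    · exact absurd h (key p q h' hq)
    · exact h'
    · exact absurd h.symm (key q p h' hp)
end

section
/- Any finite product of monomials each of which is either right-negative or equal to the trivial monomial is again right-negative or trivial; moreover if m is right-negative and m' = m · ∏ A_{i_r,s_r}^{-1} is obtained from m by multiplying by finitely many inverses A_{i,s}^{-1} of the type C₃ elements, then m' is right-negative. -/
lemma rn_zero : RightNegative 0 := by
  intro i s h _; simp at h

lemma rn_add {u v : Mon} (hu : RightNegative u) (hv : RightNegative v) :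
    RightNegative (u + v) := by
  intro i s hne htop
  set S := (u.support ∪ v.support).filter (fun p => s < p.2) with hSdef
  rcases S.eq_empty_or_nonempty with hS | hS
  · have hz : ∀ (j : Fin 3) (t : ℤ), s < t → u (j, t) = 0 ∧ v (j, t) = 0 := by
      intro j t ht
      have hnot : (j, t) ∉ S := by rw [hS]; exact Finset.notMem_empty _
      rw [hSdef, Finset.mem_filter, Finset.mem_union] at hnot
      push_neg at hnot
      constructor
      · by_contra hc
        exact absurd ht (by simpa using hnot (Or.inl (Finsupp.mem_support_iff.mpr hc)))
      · by_contra hc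
        exact absurd ht (by simpa using hnot (Or.inr (Finsupp.mem_support_iff.mpr hc)))
    have hu' : u (i, s) ≤ 0 := by
      by_cases h : u (i, s) = 0
      · omega
      · exact le_of_lt (hu i s h (fun j t ht => (hz j t ht).1))
    have hv' : v (i, s) ≤ 0 := by
      by_cases h : v (i, s) = 0
      · omega
      · exact le_of_lt (hv i s h (fun j t ht => (hz j t ht).2))
    have hadd : (u + v) (i, s) = u (i, s) + v (i, s) := Finsupp.add_apply u v (i, s)
    rw [hadd] at hne ⊢
    omega
  · exfalso
    have hSim : (S.image Prod.snd).Nonempty := hS.image _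
    set T := (S.image Prod.snd).max' hSim with hT
    obtain ⟨p, hpS, hpT⟩ := Finset.mem_image.mp ((S.image Prod.snd).max'_mem hSim)
    have hpT' : p.2 = T := by rw [hT]; exact hpT
    have hsT : s < T := by
      have := (Finset.mem_filter.mp hpS).2
      omega
    have habove : ∀ (j : Fin 3) (t : ℤ), T < t → u (j, t) = 0 ∧ v (j, t) = 0 := by
      intro j t ht
      have hnot : (j, t) ∉ S := by
        intro hmem
        have h1 : t ≤ (S.image Prod.snd).max' hSim :=
          Finset.le_max' _ _ (Finset.mem_image_of_mem Prod.snd hmem)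
        rw [← hT] at h1
        omega
      rw [hSdef, Finset.mem_filter, Finset.mem_union] at hnot
      push_neg at hnot
      constructor
      · by_contra hc
        exact absurd (show s < t by omega)
          (by simpa using hnot (Or.inl (Finsupp.mem_support_iff.mpr hc)))
      · by_contra hc
        exact absurd (show s < t by omega)
          (by simpa using hnot (Or.inr (Finsupp.mem_support_iff.mpr hc)))
    have hu0 : ∀ j : Fin 3, u (j, T) ≤ 0 := by
      intro j
      by_cases h : u (j, T) = 0
      · omega
      · exact le_of_lt (hu j T h (fun j' t' ht' => (habove j' t' ht').1))
    have hv0 : ∀ j : Fin 3, v (j, T) ≤ 0 := by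
      intro j
      by_cases h : v (j, T) = 0
      · omega
      · exact le_of_lt (hv j T h (fun j' t' ht' => (habove j' t' ht').2))
    have hsum : ∀ j : Fin 3, u (j, T) + v (j, T) = 0 := by
      intro j
      have h := htop j T hsT
      rw [Finsupp.add_apply] at h
      exact h
    have hmem : p ∈ u.support ∪ v.support := (Finset.mem_filter.mp hpS).1
    have hp2 : p = (p.1, T) := by rw [← hpT']
    rcases Finset.mem_union.mp hmem with h | h
    · have h' := Finsupp.mem_support_iff.mp h
      rw [hp2] at h'
      have := hu0 p.1; have := hv0 p.1; have := hsum p.1; omega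
    · have h' := Finsupp.mem_support_iff.mp h
      rw [hp2] at h'
      have := hu0 p.1; have := hv0 p.1; have := hsum p.1; omega

lemma rnA0 (s : ℤ) : RightNegative (-(A 0 s)) := by
  intro j t hne htop
  have h1 : ¬ (t < s + 1) := by
    intro hlt
    have h := htop 0 (s + 1) hlt
    simp only [A, Y, Finsupp.coe_neg, Pi.neg_apply, Finsupp.coe_add, Finsupp.coe_sub,
      Pi.add_apply, Pi.sub_apply, Finsupp.single_apply, Prod.mk.injEq] at h
    norm_num at h
    split_ifs at h <;> omega
  fin_cases j <;>
    simp only [A, Y, Finsupp.coe_neg, Pi.neg_apply, Finsupp.coe_add, Finsupp.coe_sub,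
      Pi.add_apply, Pi.sub_apply, Finsupp.single_apply, Prod.mk.injEq] at hne ⊢ <;>
    norm_num at hne <;> norm_num <;> split_ifs at hne ⊢ <;> omega

lemma rnA1 (s : ℤ) : RightNegative (-(A 1 s)) := by
  intro j t hne htop
  have h1 : ¬ (t < s + 1) := by
    intro hlt
    have h := htop 1 (s + 1) hlt
    simp only [A, Y, Finsupp.coe_neg, Pi.neg_apply, Finsupp.coe_add, Finsupp.coe_sub,
      Pi.add_apply, Pi.sub_apply, Finsupp.single_apply, Prod.mk.injEq] at h
    norm_num at h
    split_ifs at h <;> omega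
  fin_cases j <;>
    simp only [A, Y, Finsupp.coe_neg, Pi.neg_apply, Finsupp.coe_add, Finsupp.coe_sub,
      Pi.add_apply, Pi.sub_apply, Finsupp.single_apply, Prod.mk.injEq] at hne ⊢ <;>
    norm_num at hne ⊢ <;> split_ifs at hne ⊢ <;> omega

lemma rnA2 (s : ℤ) : RightNegative (-(A 2 s)) := by
  intro j t hne htop
  have h1 : ¬ (t < s + 2) := by
    intro hlt
    have h := htop 2 (s + 2) hlt
    simp only [A, Y, Finsupp.coe_neg, Pi.neg_apply, Finsupp.coe_add, Finsupp.coe_sub,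
      Pi.add_apply, Pi.sub_apply, Finsupp.single_apply, Prod.mk.injEq] at h
    norm_num at h
    split_ifs at h <;> omega
  fin_cases j <;>
    simp only [A, Y, Finsupp.coe_neg, Pi.neg_apply, Finsupp.coe_add, Finsupp.coe_sub,
      Pi.add_apply, Pi.sub_apply, Finsupp.single_apply, Prod.mk.injEq] at hne ⊢ <;>
    norm_num at hne ⊢ <;> split_ifs at hne ⊢ <;> omega

lemma rnA (i : Fin 3) (s : ℤ) : RightNegative (-(A i s)) := by
  fin_cases i
  · exact rnA0 s
  · exact rnA1 s
  · exact rnA2 s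

lemma rn_list_sum (L : List Mon) (h : ∀ u ∈ L, RightNegative u ∨ u = 0) :
    RightNegative L.sum := by
  induction L with
  | nil => simpa using rn_zero
  | cons a L ih =>
    rw [List.sum_cons]
    have ha : RightNegative a := by
      rcases h a (List.mem_cons_self) with h' | h'
      · exact h'
      · rw [h']; exact rn_zero
    exact rn_add ha (ih (fun u hu => h u (List.mem_cons_of_mem a hu)))

lemma rn_sub_sum (L : List (Fin 3 × ℤ)) :
    ∀ m : Mon, RightNegative m →
      RightNegative (m - (L.map fun p => A p.1 p.2).sum) := by
  induction L with
  | nil => intro m hm; simpa using hm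
  | cons p L ih =>
    intro m hm
    rw [List.map_cons, List.sum_cons,
      show m - (A p.1 p.2 + (L.map fun p => A p.1 p.2).sum)
        = (m + -(A p.1 p.2)) - (L.map fun p => A p.1 p.2).sum by abel]
    exact ih _ (rn_add hm (rnA p.1 p.2))

/-- A finite product of monomials each right-negative or trivial is right-negative or
trivial; and multiplying a right-negative monomial by finitely many `A_{i,s}^{-1}`
yields a right-negative monomial. -/
theorem rightNegative_products :
    (∀ L : List Mon, (∀ u ∈ L, RightNegative u ∨ u = 0) →
      RightNegative L.sum ∨ L.sum = 0) ∧
    (∀ m : Mon, RightNegative m → ∀ L : List (Fin 3 × ℤ),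
      RightNegative (m - (L.map fun p => A p.1 p.2).sum)) := by
  constructor
  · intro L h
    exact Or.inl (rn_list_sum L h)
  · intro m hm L
    exact rn_sub_sum L m hm
end
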